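/- Let h be analytic on the unit disk with h(0) = 0, h'(0) = 1, h'(z) ≠ 0, and Re(1 + z h''(z)/h'(z)) > -1/2 for all |z| < 1. Let g satisfy g'(z) = α z h'(z) with |α| ≤ 1, and let ε ∈ ℂ with |ε| = 1, F = h + εg. Then for all z = r e^{iθ} with 0 < r < 1: Re(1 + z F''(z)/F'(z)) = Re(αεz/(1+αεz)) + Re(1 + z h''(z)/h'(z)) > -(1/2)·P_ζ(θ), where ζ = -conj(αε)·r and P_ζ(θ) = (1-|ζ|²)/|e^{iθ} - ζ|² is the Poisson kernel. -/

import Mathlib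

open Complex Metric

lemma aux_re_div (w : ℂ) (hne1 : (1 : ℂ) + w ≠ 0) :
    (w / (1 + w)).re = 1 / 2 - (1 / 2) * ((1 - ‖w‖ ^ 2) / ‖1 + w‖ ^ 2) := by
  have hN : ‖1 + w‖ ^ 2 = 1 + 2 * w.re + ‖w‖ ^ 2 := by
    rw [← Complex.normSq_eq_norm_sq,
      ← Complex.normSq_eq_norm_sq, Complex.normSq_add]
    simp only [Complex.normSq_one, one_mul, Complex.conj_re]
    ring
  have hNpos : 0 < ‖1 + w‖ ^ 2 := by
    have : (0:ℝ) < ‖1 + w‖ := norm_pos_iff.mpr hne1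
    positivity
  have hdiv : w / (1 + w) = 1 - (1 + w)⁻¹ := by field_simp; ring
  rw [hdiv, Complex.sub_re, Complex.one_re, Complex.inv_re, Complex.add_re,
    Complex.one_re]
  have hns : Complex.normSq (1 + w) = ‖1 + w‖ ^ 2 := by
    rw [Complex.normSq_eq_norm_sq]
  rw [hns]
  have key : ∀ A B c : ℝ, A ≠ 0 → A = 1 + 2 * c + B →
      1 - (1 + c) / A = 1 / 2 - 1 / 2 * ((1 - B) / A) := by
    intro A B c hA hAe
    subst hAe
    simp only [div_eq_mul_inv]
    linear_combination (-1/2 : ℝ) * mul_inv_cancel₀ hA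
  exact key (‖1 + w‖ ^ 2) (‖w‖ ^ 2) w.re (ne_of_gt hNpos) hN

theorem stmt5
    (h g : ℂ → ℂ) (α ε : ℂ)
    (hα : ‖α‖ ≤ 1) (hε : ‖ε‖ = 1)
    (hha : AnalyticOn ℂ h (ball (0 : ℂ) 1))
    (hga : AnalyticOn ℂ g (ball (0 : ℂ) 1))
    (h0 : h 0 = 0) (h1 : deriv h 0 = 1)
    (hne : ∀ z ∈ ball (0 : ℂ) 1, deriv h z ≠ 0)
    (hre : ∀ z ∈ ball (0 : ℂ) 1,
      (1 + z * deriv (deriv h) z / deriv h z).re > -(1 / 2))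
    (hderiv : ∀ z ∈ ball (0 : ℂ) 1, deriv g z = α * z * deriv h z)
    (F : ℂ → ℂ) (hF : ∀ z, F z = h z + ε * g z) :
    ∀ r θ : ℝ, 0 < r → r < 1 →
      (1 + (r * exp (θ * I)) * deriv (deriv F) (r * exp (θ * I)) /
          deriv F (r * exp (θ * I))).re
        = (α * ε * (r * exp (θ * I)) / (1 + α * ε * (r * exp (θ * I)))).re +
          (1 + (r * exp (θ * I)) * deriv (deriv h) (r * exp (θ * I)) /
            deriv h (r * exp (θ * I))).re ∧
      (1 + (r * exp (θ * I)) * deriv (deriv F) (r * exp (θ * I)) /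
          deriv F (r * exp (θ * I))).re
        > -(1 / 2) * ((1 - ‖-(starRingEnd ℂ (α * ε)) * r‖ ^ 2) /
            ‖exp (θ * I) - (-(starRingEnd ℂ (α * ε)) * r)‖ ^ 2) := by
  intro r θ hr hr1
  have hha' : AnalyticOnNhd ℂ h (ball (0:ℂ) 1) :=
    isOpen_ball.analyticOn_iff_analyticOnNhd.mp hha
  have hga' : AnalyticOnNhd ℂ g (ball (0:ℂ) 1) :=
    isOpen_ball.analyticOn_iff_analyticOnNhd.mp hga
  set z : ℂ := (r : ℂ) * exp (θ * I) with hzdef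
  have hzn : ‖z‖ = r := by
    rw [hzdef, norm_mul, Complex.norm_real, Real.norm_of_nonneg hr.le,
      Complex.norm_exp_ofReal_mul_I, mul_one]
  have hball : z ∈ ball (0:ℂ) 1 := by
    rw [mem_ball, dist_zero_right, hzn]; exact hr1
  -- first derivative of F on the ball
  have hFderiv : ∀ w ∈ ball (0:ℂ) 1, deriv F w = (1 + α * ε * w) * deriv h w := by
    intro w hw
    have hFeq : F = fun x => h x + ε * g x := funext hF
    have d1 := (hha' w hw).differentiableAt
    have d2 := (hga' w hw).differentiableAt
    rw [hFeq, deriv_fun_add d1 (d2.const_mul ε), deriv_const_mul ε d2, hderiv w hw]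
    ring
  -- second derivative of F
  have hF2 : deriv (deriv F) z
      = α * ε * deriv h z + (1 + α * ε * z) * deriv (deriv h) z := by
    have hev : deriv F =ᶠ[nhds z] fun w => (1 + α * ε * w) * deriv h w :=
      Filter.eventuallyEq_of_mem (isOpen_ball.mem_nhds hball) hFderiv
    rw [hev.deriv_eq]
    have d1 : DifferentiableAt ℂ (fun w : ℂ => 1 + α * ε * w) z := by fun_prop
    have d2 : DifferentiableAt ℂ (deriv h) z := ((hha'.deriv) z hball).differentiableAt
    rw [deriv_fun_mul d1 d2]
    have hc : deriv (fun w : ℂ => 1 + α * ε * w) z = α * ε := by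
      have := (((hasDerivAt_id z).const_mul (α * ε)).const_add (1 : ℂ)).deriv
      simpa using this
    rw [hc]
  set w : ℂ := α * ε * z with hwdef
  have hwn : ‖w‖ < 1 := by
    have hw1 : ‖w‖ = ‖α‖ * r := by
      rw [hwdef, norm_mul, norm_mul, hε, mul_one, hzn]
    rw [hw1]
    nlinarith [norm_nonneg α]
  have hne1 : (1 : ℂ) + w ≠ 0 := by
    intro hc
    have : w = -1 := by linear_combination hc
    rw [this] at hwn; simp at hwn
  have hhz := hne z hball
  -- main identity
  have hid : 1 + z * deriv (deriv F) z / deriv F z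
      = w / (1 + w) + (1 + z * deriv (deriv h) z / deriv h z) := by
    rw [hF2, hFderiv z hball, ← hwdef]
    field_simp
    ring
  -- norm equalities
  have heq1 : ‖-(starRingEnd ℂ (α * ε)) * (r : ℂ)‖ = ‖w‖ := by
    have h1 : ‖-(starRingEnd ℂ (α * ε)) * (r : ℂ)‖ = ‖α * ε‖ * r := by
      rw [norm_mul, norm_neg, RCLike.norm_conj, Complex.norm_real,
        Real.norm_of_nonneg hr.le]
    have h2 : ‖w‖ = ‖α * ε‖ * r := by rw [hwdef, norm_mul, hzn]
    rw [h1, h2]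
  have heq2 : ‖exp (θ * I) - (-(starRingEnd ℂ (α * ε)) * (r : ℂ))‖ = ‖1 + w‖ := by
    have key : exp (θ * I) - (-(starRingEnd ℂ (α * ε)) * (r : ℂ))
        = exp (θ * I) * (starRingEnd ℂ (1 + w)) := by
      have hce : (starRingEnd ℂ) (exp (θ * I)) = exp (-(θ * I)) := by
        rw [← Complex.exp_conj, map_mul, Complex.conj_ofReal, Complex.conj_I, mul_neg]
      have hee : exp (θ * I) * exp (-(θ * I)) = 1 := by
        rw [← Complex.exp_add, add_neg_cancel, Complex.exp_zero]
      rw [hwdef, hzdef]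
      simp only [map_add, map_one, map_mul, Complex.conj_ofReal, hce]
      linear_combination (-(starRingEnd ℂ α * starRingEnd ℂ ε * (r : ℂ))) * hee
    rw [key, norm_mul, Complex.norm_exp_ofReal_mul_I, one_mul,
      RCLike.norm_conj]
  -- real part of w/(1+w)
  have hre_w : (w / (1 + w)).re = 1 / 2 - (1 / 2) * ((1 - ‖w‖ ^ 2) / ‖1 + w‖ ^ 2) :=
    aux_re_div w hne1
  constructor
  · rw [hid, Complex.add_re]
  · rw [hid, Complex.add_re, heq1, heq2]
    have := hre z hball
    rw [hre_w]
    have h2 : -(1/2 : ℝ) * ((1 - ‖w‖ ^ 2) / ‖1 + w‖ ^ 2)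
        = (1 / 2 - (1 / 2) * ((1 - ‖w‖ ^ 2) / ‖1 + w‖ ^ 2)) - 1 / 2 := by ring
    rw [h2]
    linarith
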